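/- Let a : ℝ → ℝ be C¹ with a' nondecreasing, η : ℝ → ℝ of class C², and q with q' = η'·a'. For any u⁻ < u⁺, |q(u⁺) − q(u⁻) − ((a(u⁺) − a(u⁻))/(u⁺ − u⁻))·(η(u⁺) − η(u⁻))| ≤ (1/2)·(sup over [u⁻,u⁺] of |η''|)·∫_{[u⁻,u⁺]} (u⁺ − s)(s − u⁻) da''(s). -/

import Mathlib

open MeasureTheory intervalIntegral

section
open Set Function


lemma fubini_aux (A : StieltjesFunction ℝ) (um up : ℝ) (h : um < up) :
    ∫ s in Set.Icc um up, (up - s) * (s - um) ∂A.measure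
      = ∫ t in Set.Ioc um up, (2*t - um - up) * (A t - leftLim A um) := by
  set w : ℝ → ℝ := fun t => 2*t - um - up with hw
  set μ := A.measure.restrict (Icc um up) with hμ
  set ν := (volume : Measure ℝ).restrict (Ioc um up) with hν
  haveI : IsFiniteMeasure μ := by
    constructor
    rw [hμ, Measure.restrict_apply_univ, A.measure_Icc]
    exact ENNReal.ofReal_lt_top
  set F : ℝ × ℝ → ℝ := {p : ℝ × ℝ | p.1 ≤ p.2}.indicator (fun p => w p.2) with hF
  have hS : MeasurableSet {p : ℝ × ℝ | p.1 ≤ p.2} := measurableSet_le measurable_fst measurable_snd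
  have hwc : Continuous w := by fun_prop
  have hFmeas : AEStronglyMeasurable F (μ.prod ν) :=
    ((hwc.comp continuous_snd).stronglyMeasurable.indicator hS).aestronglyMeasurable
  have hprod : μ.prod ν = (A.measure.prod volume).restrict ((Icc um up) ×ˢ (Ioc um up)) :=
    Measure.prod_restrict _ _
  -- boundedness
  have hbound : ∀ᵐ p ∂(μ.prod ν), ‖F p‖ ≤ up - um := by
    rw [hprod]
    filter_upwards [ae_restrict_mem (measurableSet_Icc.prod measurableSet_Ioc)] with p hp
    have h2 : p.2 ∈ Ioc um up := hp.2
    have : |w p.2| ≤ up - um := by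
      simp only [hw, abs_le]
      constructor <;> nlinarith [h2.1, h2.2]
    calc ‖F p‖ ≤ ‖w p.2‖ := by
          rw [hF]; exact norm_indicator_le_norm_self _ p
      _ ≤ up - um := this
  have hFint : Integrable F (μ.prod ν) :=
    Integrable.mono' (integrable_const (up - um)) hFmeas hbound
  have hswap : ∫ s, (∫ t, F (s, t) ∂ν) ∂μ = ∫ t, (∫ s, F (s, t) ∂μ) ∂ν :=
    MeasureTheory.integral_integral_swap (f := fun s t => F (s, t)) hFint
  -- inner integral, way 1
  have hway1 : ∀ s ∈ Icc um up, (∫ t, F (s, t) ∂ν) = (up - s) * (s - um) := by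
    intro s hs
    have hind : (fun t => F (s, t)) = (Ici s).indicator w := by
      funext t
      by_cases hst : s ≤ t
      · rw [hF, Set.indicator_of_mem (by exact hst), Set.indicator_of_mem (by exact hst)]
      · rw [hF, Set.indicator_of_notMem (by exact hst), Set.indicator_of_notMem (by exact hst)]
    rw [hind, hν, MeasureTheory.integral_indicator measurableSet_Ici, Measure.restrict_restrict measurableSet_Ici]
    have hsetae : (Ici s ∩ Ioc um up : Set ℝ) =ᵐ[volume] Ioc s up := by
      rw [MeasureTheory.ae_eq_set]
      constructor
      · refine measure_mono_null (fun t ht => ?_) (Real.volume_singleton (a := s))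
        simp only [mem_diff, mem_inter_iff, mem_Ici, mem_Ioc, mem_singleton_iff] at ht ⊢
        obtain ⟨⟨h1, h2, h3⟩, h4⟩ := ht
        by_contra hne
        exact h4 ⟨lt_of_le_of_ne h1 (Ne.symm hne), h3⟩
      · refine measure_mono_null (fun t ht => ?_) (measure_empty (μ := volume))
        simp only [mem_diff, mem_inter_iff, mem_Ici, mem_Ioc, mem_empty_iff_false] at ht ⊢
        obtain ⟨⟨h1, h2⟩, h3⟩ := ht
        exact h3 ⟨h1.le, lt_of_le_of_lt hs.1 h1, h2⟩
    rw [Measure.restrict_congr_set hsetae, ← intervalIntegral.integral_of_le (hs.2)]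
    have : ∫ t in s..up, w t = ∫ t in s..up, (2*t + (-(um+up))) := by
      congr 1; funext t; rw [hw]; ring
    rw [this, intervalIntegral.integral_add (by apply Continuous.intervalIntegrable; fun_prop)
        (intervalIntegrable_const), intervalIntegral.integral_const_mul, integral_id,
        intervalIntegral.integral_const]
    simp only [smul_eq_mul]
    ring
  -- inner integral, way 2
  have hway2 : ∀ t ∈ Ioc um up, (∫ s, F (s, t) ∂μ) = (A t - leftLim A um) * w t := by
    intro t ht
    have hind : (fun s => F (s, t)) = (Iic t).indicator (fun _ => w t) := by
      funext s
      by_cases hst : s ≤ t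
      · rw [hF, Set.indicator_of_mem (by exact hst), Set.indicator_of_mem (by exact hst)]
      · rw [hF, Set.indicator_of_notMem (by exact hst), Set.indicator_of_notMem (by exact hst)]
    rw [hind, integral_indicator_const _ measurableSet_Iic]
    rw [hμ, measureReal_def, Measure.restrict_apply measurableSet_Iic]
    have hseteq : (Iic t ∩ Icc um up : Set ℝ) = Icc um t := by
      ext x
      simp only [mem_inter_iff, mem_Iic, mem_Icc]
      exact ⟨fun ⟨h1, h2, h3⟩ => ⟨h2, h1⟩, fun ⟨h1, h2⟩ => ⟨h2, h1, h2.trans ht.2⟩⟩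
    rw [hseteq, A.measure_Icc, ENNReal.toReal_ofReal
      (sub_nonneg.2 (A.mono.leftLim_le ht.1.le)), smul_eq_mul]
  calc ∫ s in Set.Icc um up, (up - s) * (s - um) ∂A.measure
      = ∫ s, (up - s) * (s - um) ∂μ := rfl
    _ = ∫ s, (∫ t, F (s, t) ∂ν) ∂μ := by
        rw [hμ]
        exact (setIntegral_congr_fun measurableSet_Icc (fun s hs => (hway1 s hs))).symm
    _ = ∫ t, (∫ s, F (s, t) ∂μ) ∂ν := hswap
    _ = ∫ t, (A t - leftLim A um) * w t ∂ν := by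
        rw [hν]
        exact setIntegral_congr_fun measurableSet_Ioc (fun t ht => hway2 t ht)
    _ = ∫ t in Set.Ioc um up, (2*t - um - up) * (A t - leftLim A um) := by
        rw [hν]; congr 1; funext t; rw [hw]; ring
open MeasureTheory intervalIntegral

end

/-- The entropy cost is controlled by the regularity cost `Δ`:
`|c_η(u⁺,u⁻)| ≤ (1/2)·(sup_{[u⁻,u⁺]} |η''|)·∫_{[u⁻,u⁺]} (u⁺−s)(s−u⁻) da''(s)`. -/
theorem stmt3 (a η q : ℝ → ℝ) (ha : ContDiff ℝ 1 a) (hmono : Monotone (deriv a))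
    (A : StieltjesFunction ℝ) (hA : ∀ x, A x = deriv a x)
    (hη : ContDiff ℝ 2 η)
    (hq : ∀ v, HasDerivAt q (deriv η v * deriv a v) v)
    (um up : ℝ) (h : um < up) :
    |q up - q um - ((a up - a um) / (up - um)) * (η up - η um)|
      ≤ (1 / 2) * (⨆ t : Set.Icc um up, |deriv (deriv η) (t : ℝ)|) *
          ∫ s in Set.Icc um up, (up - s) * (s - um) ∂A.measure := by
  have hL : (0:ℝ) < up - um := sub_pos.2 h
  have hLne : up - um ≠ 0 := ne_of_gt hL
  set σ : ℝ := (a up - a um) / (up - um) with hσ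
  -- regularity facts
  have haD : Differentiable ℝ a := ha.differentiable one_ne_zero
  have haC : Continuous (deriv a) := ha.continuous_deriv le_rfl
  have hηD : Differentiable ℝ η := hη.differentiable (by norm_num)
  have hη1 : ContDiff ℝ 1 (deriv η) := by
    have h2 : ContDiff ℝ (1+1) η := by norm_num; exact hη
    exact (contDiff_succ_iff_deriv.1 h2).2.2
  have hη'D : Differentiable ℝ (deriv η) := hη1.differentiable one_ne_zero
  have hη'C : Continuous (deriv η) := hη'D.continuous
  have hη''C : Continuous (deriv (deriv η)) := hη1.continuous_deriv le_rfl
  -- the function g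
  set g : ℝ → ℝ := fun v => a v - a um - σ * (v - um) with hg
  have hgC : Continuous g := by
    rw [hg]; exact (ha.continuous.sub continuous_const).sub (continuous_const.mul (by fun_prop))
  have hgd : ∀ v, HasDerivAt g (deriv a v - σ) v := by
    intro v
    have h1 : HasDerivAt a (deriv a v) v := (haD v).hasDerivAt
    have h2 : HasDerivAt (fun v : ℝ => σ * (v - um)) σ v := by
      simpa using ((hasDerivAt_id v).sub_const um).const_mul σ
    exact (h1.sub_const (a um)).sub h2
  have hσL : σ * (up - um) = a up - a um := div_mul_cancel₀ _ hLne
  have hgum : g um = 0 := by simp [hg]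
  have hgup : g up = 0 := by rw [hg]; simp only; rw [hσL]; ring
  -- convexity : g ≤ 0 on Icc
  have hderivg : deriv g = fun v => deriv a v - σ := funext fun v => (hgd v).deriv
  have hconv : ConvexOn ℝ (Set.Icc um up) g := by
    have hm : MonotoneOn (deriv g) (interior (Set.Icc um up)) := by
      rw [hderivg]
      exact fun x _ y _ hxy => sub_le_sub_right (hmono hxy) σ
    exact hm.convexOn_of_deriv (convex_Icc _ _) hgC.continuousOn
      (fun x _ => ((hgd x).differentiableAt).differentiableWithinAt)
  have hgle : ∀ v ∈ Set.Icc um up, g v ≤ 0 := by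
    intro v hv
    have hseg : v ∈ segment ℝ um up := by rwa [segment_eq_Icc h.le]
    have := hconv.le_on_segment (Set.left_mem_Icc.2 h.le) (Set.right_mem_Icc.2 h.le) hseg
    rwa [hgum, hgup, max_self] at this
  -- FTC identities
  have hqI : q up - q um = ∫ v in um..up, deriv η v * deriv a v :=
    (integral_eq_sub_of_hasDerivAt (fun v _ => hq v) ((hη'C.mul haC).intervalIntegrable _ _)).symm
  have hηI : η up - η um = ∫ v in um..up, deriv η v :=
    (integral_eq_sub_of_hasDerivAt (fun v _ => (hηD v).hasDerivAt)
      (hη'C.intervalIntegrable _ _)).symm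
  have haI : a up - a um = ∫ v in um..up, deriv a v :=
    (integral_eq_sub_of_hasDerivAt (fun v _ => (haD v).hasDerivAt)
      (haC.intervalIntegrable _ _)).symm
  -- the entropy cost as an integral
  have hc : q up - q um - σ * (η up - η um) = ∫ v in um..up, deriv η v * (deriv a v - σ) := by
    rw [hqI, hηI, ← intervalIntegral.integral_const_mul,
      ← intervalIntegral.integral_sub (f := fun v => deriv η v * deriv a v)
        (g := fun v => σ * deriv η v) ((hη'C.mul haC).intervalIntegrable _ _)
        ((continuous_const.mul hη'C).intervalIntegrable _ _)]
    congr 1; funext v; ring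
  -- integration by parts
  have hparts : ∫ v in um..up, deriv η v * (deriv a v - σ)
      = - ∫ v in um..up, deriv (deriv η) v * g v := by
    have := intervalIntegral.integral_mul_deriv_eq_deriv_mul
      (u := deriv η) (v := g) (u' := deriv (deriv η)) (v' := fun v => deriv a v - σ)
      (a := um) (b := up)
      (fun x _ => (hη'D x).hasDerivAt) (fun x _ => hgd x)
      (hη''C.intervalIntegrable _ _) ((haC.sub continuous_const).intervalIntegrable _ _)
    rw [this, hgum, hgup]; ring
  -- the sup bound
  haveI : Nonempty ↑(Set.Icc um up) := (Set.nonempty_Icc.mpr h.le).to_subtype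
  set M : ℝ := ⨆ t : Set.Icc um up, |deriv (deriv η) (t : ℝ)| with hMdef
  have hbdd : BddAbove (Set.range fun t : Set.Icc um up => |deriv (deriv η) (t : ℝ)|) := by
    have hc : IsCompact ((fun v => |deriv (deriv η) v|) '' Set.Icc um up) :=
      (isCompact_Icc).image (by fun_prop)
    have heq : (Set.range fun t : Set.Icc um up => |deriv (deriv η) (t : ℝ)|)
        = (fun v => |deriv (deriv η) v|) '' Set.Icc um up := by
      ext x
      constructor
      · rintro ⟨⟨t, ht⟩, rfl⟩; exact ⟨t, ht, rfl⟩
      · rintro ⟨t, ht, rfl⟩; exact ⟨⟨t, ht⟩, rfl⟩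
    rw [heq]
    exact hc.bddAbove
  have hM : ∀ v ∈ Set.Icc um up, |deriv (deriv η) v| ≤ M := fun v hv =>
    le_ciSup hbdd (⟨v, hv⟩ : Set.Icc um up)
  -- key bound
  have hkey : |∫ v in um..up, deriv (deriv η) v * g v| ≤ M * ∫ v in um..up, -g v := by
    have habs : |∫ v in um..up, deriv (deriv η) v * g v|
        ≤ ∫ v in um..up, |deriv (deriv η) v * g v| := by
      exact intervalIntegral.abs_integral_le_integral_abs h.le
    refine habs.trans ?_
    rw [← intervalIntegral.integral_const_mul]
    refine intervalIntegral.integral_mono_on h.le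
      (((hη''C.mul hgC).abs).intervalIntegrable _ _)
      ((continuous_const.mul hgC.neg).intervalIntegrable _ _) ?_
    intro v hv
    rw [abs_mul, abs_of_nonpos (hgle v hv)]
    exact mul_le_mul_of_nonneg_right (hM v hv) (neg_nonneg.2 (hgle v hv))
  -- integration by parts for ∫ -g
  have hFint : ∫ v in um..up, -g v = ∫ t in um..up, (deriv a t - σ) * (t - up) := by
    have := intervalIntegral.integral_mul_deriv_eq_deriv_mul
      (u := g) (v := fun t => t - up) (u' := fun v => deriv a v - σ) (v' := fun _ => (1:ℝ))
      (a := um) (b := up)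
      (fun x _ => hgd x) (fun x _ => by simpa using (hasDerivAt_id x).sub_const up)
      ((haC.sub continuous_const).intervalIntegrable _ _) (intervalIntegrable_const)
    simp only [mul_one] at this
    rw [intervalIntegral.integral_neg, this, hgum, hgup]
    ring
  -- Stieltjes side via Fubini
  set c₀ : ℝ := Function.leftLim A um with hc₀
  have hIcc : ∫ s in Set.Icc um up, (up - s) * (s - um) ∂A.measure
      = ∫ t in um..up, (2*t - um - up) * (deriv a t - c₀) := by
    rw [fubini_aux A um up h]
    have heq : (fun t => (2*t - um - up) * (A t - c₀))
        = fun t => (2*t - um - up) * (deriv a t - c₀) := funext fun t => by rw [hA]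
    rw [← heq]
    exact (intervalIntegral.integral_of_le h.le).symm
  -- elementary integrals
  set J1 : ℝ := ∫ t in um..up, t * deriv a t with hJ1
  set J2 : ℝ := ∫ t in um..up, deriv a t with hJ2
  have iJ1 : IntervalIntegrable (fun t => t * deriv a t) volume um up := by
    apply Continuous.intervalIntegrable; fun_prop
  have iJ2 : IntervalIntegrable (deriv a) volume um up := haC.intervalIntegrable _ _
  have hL1 : ∫ t in um..up, (2*t - um - up) * (deriv a t - c₀)
      = 2*J1 - (um+up)*J2 - (2*c₀*((up^2 - um^2)/2) - c₀*(um+up)*(up-um)) := by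
    have heq : (fun t => (2*t - um - up) * (deriv a t - c₀))
        = fun t => (2*(t*deriv a t) - (um+up)*(deriv a t)) - ((2*c₀)*t - c₀*(um+up)) := by
      funext t; ring
    rw [heq,
      intervalIntegral.integral_sub
        (by apply Continuous.intervalIntegrable; fun_prop :
          IntervalIntegrable (fun t : ℝ => 2*(t*deriv a t) - (um+up)*(deriv a t)) volume um up)
        (by apply Continuous.intervalIntegrable; fun_prop :
          IntervalIntegrable (fun t : ℝ => (2*c₀)*t - c₀*(um+up)) volume um up),
      intervalIntegral.integral_sub
        (by apply Continuous.intervalIntegrable; fun_prop :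
          IntervalIntegrable (fun t : ℝ => 2*(t*deriv a t)) volume um up)
        (by apply Continuous.intervalIntegrable; fun_prop :
          IntervalIntegrable (fun t : ℝ => (um+up)*(deriv a t)) volume um up),
      intervalIntegral.integral_sub
        (by apply Continuous.intervalIntegrable; fun_prop :
          IntervalIntegrable (fun t : ℝ => (2*c₀)*t) volume um up)
        (intervalIntegrable_const),
      intervalIntegral.integral_const_mul, intervalIntegral.integral_const_mul,
      intervalIntegral.integral_const_mul, intervalIntegral.integral_const,
      integral_id]
    simp only [smul_eq_mul, ← hJ1, ← hJ2]
    ring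
  have hR1 : ∫ t in um..up, (deriv a t - σ) * (t - up)
      = (J1 - up*J2) - σ*((up^2 - um^2)/2 - up*(up-um)) := by
    have heq : (fun t => (deriv a t - σ) * (t - up))
        = fun t => ((t*deriv a t) - up*(deriv a t)) - (σ*t - σ*up) := by
      funext t; ring
    rw [heq,
      intervalIntegral.integral_sub
        (by apply Continuous.intervalIntegrable; fun_prop :
          IntervalIntegrable (fun t : ℝ => (t*deriv a t) - up*(deriv a t)) volume um up)
        (by apply Continuous.intervalIntegrable; fun_prop :
          IntervalIntegrable (fun t : ℝ => σ*t - σ*up) volume um up),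
      intervalIntegral.integral_sub iJ1
        (by apply Continuous.intervalIntegrable; fun_prop :
          IntervalIntegrable (fun t : ℝ => up*(deriv a t)) volume um up),
      intervalIntegral.integral_sub
        (by apply Continuous.intervalIntegrable; fun_prop :
          IntervalIntegrable (fun t : ℝ => σ*t) volume um up)
        (intervalIntegrable_const),
      intervalIntegral.integral_const_mul, intervalIntegral.integral_const_mul,
      intervalIntegral.integral_const, integral_id]
    simp only [smul_eq_mul, ← hJ1, ← hJ2]
    ring
  have hσJ : σ * (up - um) = J2 := by rw [hσL, haI]
  -- final assembly
  rw [hc, hparts, abs_neg, hIcc, hL1]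
  calc |∫ v in um..up, deriv (deriv η) v * g v|
      ≤ M * ∫ v in um..up, -g v := hkey
    _ = M * ((J1 - up*J2) - σ*((up^2 - um^2)/2 - up*(up-um))) := by rw [hFint, hR1]
    _ = 1 / 2 * M * (2*J1 - (um+up)*J2 - (2*c₀*((up^2 - um^2)/2) - c₀*(um+up)*(up-um))) := by
        linear_combination (M * (up - um) / 2) * hσJ
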